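/- Let T be a finite tree on n ≥ 4 vertices that admits a redundant identifying code. Then ⌈4(n+1)/5⌉ ≤ RED:IC(T) ≤ n. -/

import Mathlib

open scoped symmDiff

variable {V : Type*}

/-- The closed neighborhood of a vertex. -/
def closedNbhd (G : SimpleGraph V) (v : V) : Set V := insert v (G.neighborSet v)

/-- A vertex `v` is at least `k`-dominated by `S`. -/
def kDominated (G : SimpleGraph V) (S : Set V) (k : ℕ) (v : V) : Prop :=
  k ≤ (closedNbhd G v ∩ S).ncard

/-- Two vertices `u` and `v` are `k`-distinguished by `S`. -/
def kDistinguished (G : SimpleGraph V) (S : Set V) (k : ℕ) (u v : V) : Prop :=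
  k ≤ ((closedNbhd G u ∩ S) ∆ (closedNbhd G v ∩ S)).ncard

/-- `S` is an identifying code of `G`. -/
def IsIC (G : SimpleGraph V) (S : Set V) : Prop :=
  (∀ v, kDominated G S 1 v) ∧ ∀ u v, u ≠ v → kDistinguished G S 1 u v

/-- `S` is a redundant identifying code of `G`. -/
def IsRedIC (G : SimpleGraph V) (S : Set V) : Prop :=
  (∀ v, kDominated G S 2 v) ∧ ∀ u v, u ≠ v → kDistinguished G S 2 u v

/-- The minimum cardinality of a redundant identifying code of `G`. -/
noncomputable def redIC (G : SimpleGraph V) : ℕ :=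
  sInf {n | ∃ S : Set V, IsRedIC G S ∧ S.ncard = n}

/-- The degree of a vertex, as the cardinality of its open neighborhood. -/
noncomputable def deg (G : SimpleGraph V) (v : V) : ℕ := (G.neighborSet v).ncard

/-- A leaf is a vertex of degree 1. -/
def IsLeaf (G : SimpleGraph V) (v : V) : Prop := deg G v = 1

/-- A support vertex is a vertex adjacent to a leaf. -/
def IsSupport (G : SimpleGraph V) (v : V) : Prop := ∃ u, G.Adj v u ∧ IsLeaf G u

/-- Two distinct vertices are closed twins if they have the same closed neighborhood. -/
def ClosedTwins (G : SimpleGraph V) (u v : V) : Prop :=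
  u ≠ v ∧ closedNbhd G u = closedNbhd G v


section RedICProof

open SimpleGraph
open scoped Classical

set_option linter.unusedSectionVars false

variable {G : SimpleGraph V}

variable {V : Type*} {G : SimpleGraph V}

/-- In a tree, every path between two vertices has length equal to the distance. -/
lemma tree_path_length_eq_dist (hT : G.IsTree) {a b : V} (p : G.Walk a b) (hp : p.IsPath) :
    p.length = G.dist a b := by
  classical
  obtain ⟨q, hq⟩ := hT.isConnected.exists_walk_length_eq_dist a b
  have h1 : p = q.bypass := by
    obtain ⟨u, hu, hu2⟩ := hT.existsUnique_path a b
    rw [hu2 p hp, hu2 q.bypass q.bypass_isPath]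
  have h5 : p.length = q.bypass.length := by rw [h1]
  have h2 : q.bypass.length ≤ q.length := q.length_bypass_le
  have h3 := SimpleGraph.dist_le p
  omega

lemma dist_lt_of_mem_support {u r v : V} (Q : G.Walk u r)
    (hv : v ∈ Q.support) (hvu : v ≠ u) : G.dist v r + 1 ≤ Q.length := by
  classical
  have hsplit := Q.take_spec hv
  have hlen : (Q.takeUntil v hv).length + (Q.dropUntil v hv).length = Q.length := by
    rw [← Walk.length_append, hsplit]
  have h1 : G.dist v r ≤ (Q.dropUntil v hv).length := SimpleGraph.dist_le _
  have h2 : (Q.takeUntil v hv).length ≠ 0 := by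
    intro h0
    exact hvu (Walk.eq_of_length_eq_zero h0).symm
  omega

/-- Helper: a path from `w` to `r` of length `dist w r` prepended by edge `v–w` is a path,
when `dist w r + 1 = dist v r`. -/
lemma cons_isPath_aux (hT : G.IsTree) {v w r : V} (hw : G.Adj v w)
    (hwd : G.dist w r + 1 = G.dist v r) :
    ∃ Q : G.Walk w r, (Walk.cons hw Q).IsPath ∧ Q.IsPath := by
  classical
  obtain ⟨q, hq⟩ := hT.isConnected.exists_walk_length_eq_dist w r
  refine ⟨q.bypass, ?_, q.bypass_isPath⟩
  apply q.bypass_isPath.cons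
  intro hmem
  have hvw : v ≠ w := hw.ne
  have := dist_lt_of_mem_support q.bypass hmem hvw
  have h2 : q.bypass.length ≤ q.length := q.length_bypass_le
  omega

lemma exists_parent (hT : G.IsTree) (r : V) {v : V} (hv : v ≠ r) :
    ∃! u, G.Adj v u ∧ G.dist u r + 1 = G.dist v r := by
  classical
  have hd : 0 < G.dist v r := hT.isConnected.pos_dist_of_ne hv
  obtain ⟨p, hp⟩ := hT.isConnected.exists_walk_length_eq_dist v r
  have hex : ∃ u, G.Adj v u ∧ G.dist u r + 1 = G.dist v r := by
    cases p with
    | nil => simp at hp; rw [SimpleGraph.dist_self] at hd; omega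
    | cons h q =>
      rename_i x
      refine ⟨x, h, ?_⟩
      have h1 : G.dist x r ≤ q.length := SimpleGraph.dist_le q
      have h2 : G.dist v r ≤ G.dist x r + 1 := by
        obtain ⟨q', hq'⟩ := hT.isConnected.exists_walk_length_eq_dist x r
        have := SimpleGraph.dist_le (Walk.cons h q')
        simpa [hq'] using this
      simp only [Walk.length_cons] at hp
      omega
  obtain ⟨u, hu⟩ := hex
  refine ⟨u, hu, ?_⟩
  rintro w ⟨hwadj, hwd⟩
  obtain ⟨Qw, hQw, _⟩ := cons_isPath_aux hT hwadj hwd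
  obtain ⟨Qu, hQu, _⟩ := cons_isPath_aux hT hu.1 hu.2
  obtain ⟨P, hP, hP2⟩ := hT.existsUnique_path v r
  have e1 : Walk.cons hwadj Qw = Walk.cons hu.1 Qu := by
    rw [hP2 _ hQw, hP2 _ hQu]
  have e2 : (Walk.cons hwadj Qw).support = (Walk.cons hu.1 Qu).support := by rw [e1]
  rw [Walk.support_cons, Walk.support_cons, Qw.support_eq_cons, Qu.support_eq_cons] at e2
  simp at e2; rw [Qw.support_eq_cons, Qu.support_eq_cons] at e2; injection e2

noncomputable def par (hT : G.IsTree) (r : V) (v : V) : V :=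
  if hv : v = r then r else (exists_parent hT r hv).exists.choose

lemma par_r (hT : G.IsTree) (r : V) : par hT r r = r := by simp [par]

lemma par_spec (hT : G.IsTree) (r : V) {v : V} (hv : v ≠ r) :
    G.Adj v (par hT r v) ∧ G.dist (par hT r v) r + 1 = G.dist v r := by
  rw [par, dif_neg hv]
  exact (exists_parent hT r hv).exists.choose_spec

lemma par_adj (hT : G.IsTree) (r : V) {v : V} (hv : v ≠ r) : G.Adj v (par hT r v) :=
  (par_spec hT r hv).1

lemma dist_par (hT : G.IsTree) (r : V) {v : V} (hv : v ≠ r) :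
    G.dist (par hT r v) r + 1 = G.dist v r := (par_spec hT r hv).2

lemma par_eq_of (hT : G.IsTree) (r : V) {v u : V} (hv : v ≠ r)
    (h1 : G.Adj v u) (h2 : G.dist u r + 1 = G.dist v r) : par hT r v = u := by
  obtain ⟨w, hw, hwu⟩ := exists_parent hT r hv
  rw [hwu _ ⟨par_adj hT r hv, dist_par hT r hv⟩, hwu _ ⟨h1, h2⟩]


/-- Adjacent vertices in a tree have distances to `r` differing by exactly one. -/
lemma adj_dist_cases (hT : G.IsTree) (r : V) {u v : V} (h : G.Adj u v) :
    G.dist u r + 1 = G.dist v r ∨ G.dist v r + 1 = G.dist u r := by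
  classical
  -- triangle inequalities
  have t1 : G.dist u r ≤ G.dist v r + 1 := by
    obtain ⟨q, hq⟩ := hT.isConnected.exists_walk_length_eq_dist v r
    have := SimpleGraph.dist_le (Walk.cons h q)
    simpa [hq] using this
  have t2 : G.dist v r ≤ G.dist u r + 1 := by
    obtain ⟨q, hq⟩ := hT.isConnected.exists_walk_length_eq_dist u r
    have := SimpleGraph.dist_le (Walk.cons h.symm q)
    simpa [hq] using this
  rcases Nat.lt_trichotomy (G.dist u r) (G.dist v r) with hlt | heq | hgt
  · left; omega
  · -- impossible: build a path of length dist + 1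
    exfalso
    obtain ⟨q, hq⟩ := hT.isConnected.exists_walk_length_eq_dist v r
    have hbp : q.bypass.IsPath := q.bypass_isPath
    have hbl : q.bypass.length = G.dist v r := tree_path_length_eq_dist hT _ hbp
    have hcons : (Walk.cons h q.bypass).IsPath := by
      apply hbp.cons
      intro hmem
      have hne : u ≠ v := h.ne
      have := dist_lt_of_mem_support q.bypass hmem hne
      omega
    have := tree_path_length_eq_dist hT _ hcons
    rw [Walk.length_cons, hbl, heq] at this
    omega
  · right; omega

lemma adj_par_or (hT : G.IsTree) (r : V) {u v : V} (h : G.Adj u v) :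
    par hT r u = v ∨ par hT r v = u := by
  rcases adj_dist_cases hT r h with hc | hc
  · right
    have hvr : v ≠ r := by
      intro hvr; subst hvr; simp [SimpleGraph.dist_self] at hc
    exact par_eq_of hT r hvr h.symm hc
  · left
    have hur : u ≠ r := by
      intro hur; subst hur; simp [SimpleGraph.dist_self] at hc
    exact par_eq_of hT r hur h hc

section Desc
variable (hT : G.IsTree) (r : V)

lemma dist_par_le (v : V) : G.dist (par hT r v) r ≤ G.dist v r := by
  by_cases hv : v = r
  · subst hv; rw [par_r]
  · have := dist_par hT r hv; omega

lemma dist_iter_le (k : ℕ) (v : V) : G.dist ((par hT r)^[k] v) r ≤ G.dist v r := by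
  induction k generalizing v with
  | zero => simp
  | succ n ih =>
    rw [Function.iterate_succ_apply]
    exact le_trans (ih _) (dist_par_le hT r v)

def desc (x : V) : Set V := {u | ∃ k, (par hT r)^[k] u = x}

lemma mem_desc_self (x : V) : x ∈ desc hT r x := ⟨0, rfl⟩

lemma dist_of_mem_desc {x u : V} (h : u ∈ desc hT r x) : G.dist x r ≤ G.dist u r := by
  obtain ⟨k, hk⟩ := h
  rw [← hk]; exact dist_iter_le hT r k u

def children (x : V) : Set V := {c | par hT r c = x ∧ c ≠ x}

lemma child_ne_root {x c : V} (hc : c ∈ children hT r x) : c ≠ r := by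
  intro h; subst h
  exact hc.2 (by rw [← hc.1, par_r])

lemma child_adj {x c : V} (hc : c ∈ children hT r x) : G.Adj x c := by
  have := par_adj hT r (child_ne_root hT r hc)
  rw [hc.1] at this
  exact this.symm

lemma child_dist {x c : V} (hc : c ∈ children hT r x) : G.dist x r + 1 = G.dist c r := by
  have := dist_par hT r (child_ne_root hT r hc)
  rw [hc.1] at this; exact this

lemma not_mem_desc_child {x c : V} (hc : c ∈ children hT r x) : x ∉ desc hT r c := by
  intro h
  have h1 := dist_of_mem_desc hT r h
  have h2 := child_dist hT r hc
  omega

lemma desc_child_subset {x c : V} (hc : c ∈ children hT r x) : desc hT r c ⊆ desc hT r x := by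
  rintro u ⟨k, hk⟩
  exact ⟨k + 1, by rw [Function.iterate_succ_apply', hk, hc.1]⟩

lemma desc_child_disjoint {x c1 c2 : V} (h1 : c1 ∈ children hT r x) (h2 : c2 ∈ children hT r x)
    {u : V} (hu1 : u ∈ desc hT r c1) (hu2 : u ∈ desc hT r c2) : c1 = c2 := by
  obtain ⟨k1, hk1⟩ := hu1
  obtain ⟨k2, hk2⟩ := hu2
  wlog hk : k1 ≤ k2 generalizing k1 k2 c1 c2
  · exact (this h2 h1 _ hk2 _ hk1 (by omega)).symm
  obtain ⟨j, rfl⟩ := Nat.exists_eq_add_of_le hk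
  rw [Nat.add_comm, Function.iterate_add_apply, hk1] at hk2
  rcases Nat.eq_zero_or_pos j with hj | hj
  · subst hj; simpa using hk2
  · exfalso
    obtain ⟨m, rfl⟩ := Nat.exists_eq_succ_of_ne_zero (Nat.pos_iff_ne_zero.mp hj)
    rw [Function.iterate_succ_apply, h1.1] at hk2
    have : G.dist c2 r ≤ G.dist x r := by
      rw [← hk2]; exact dist_iter_le hT r m x
    have := child_dist hT r h2
    omega

lemma desc_decomp {x u : V} (hu : u ∈ desc hT r x) (hne : u ≠ x) :
    ∃ c ∈ children hT r x, u ∈ desc hT r c := by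
  classical
  have hex : ∃ k, (par hT r)^[k] u = x := hu
  obtain ⟨k, hk⟩ := hex
  -- use minimal such k
  have hminex : ∃ k, (par hT r)^[k] u = x := ⟨k, hk⟩
  set m := Nat.find hminex with hm
  have hmspec : (par hT r)^[m] u = x := Nat.find_spec hminex
  have hm0 : m ≠ 0 := by
    intro h0; rw [h0] at hmspec; exact hne hmspec
  obtain ⟨j, hj⟩ := Nat.exists_eq_succ_of_ne_zero hm0
  refine ⟨(par hT r)^[j] u, ⟨?_, ?_⟩, ⟨j, rfl⟩⟩
  · have hx : (par hT r)^[j + 1] u = x := by rw [← Nat.succ_eq_add_one, ← hj]; exact hmspec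
    rw [Function.iterate_succ_apply'] at hx
    exact hx
  · intro heq
    have := Nat.find_min hminex (m := j) (by omega)
    exact this heq

lemma root_mem_desc_all (v : V) : v ∈ desc hT r r := by
  classical
  have : ∀ n v, G.dist v r = n → ∃ k, (par hT r)^[k] v = r := by
    intro n
    induction n using Nat.strong_induction_on with
    | _ n ih =>
      intro v hv
      by_cases hvr : v = r
      · exact ⟨0, by simp [hvr]⟩
      · have hd := dist_par hT r hvr
        obtain ⟨k, hk⟩ := ih (G.dist (par hT r v) r) (by omega) (par hT r v) rfl
        exact ⟨k + 1, by rw [Function.iterate_succ_apply, hk]⟩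
  exact this (G.dist v r) v rfl

lemma adj_mem_children_or (hT : G.IsTree) (r : V) {x y : V} (h : G.Adj x y) :
    y = par hT r x ∨ y ∈ children hT r x := by
  rcases adj_par_or hT r h with hc | hc
  · left; exact hc.symm
  · right; exact ⟨hc, h.ne'⟩

end Desc

section Count
variable [Fintype V] [DecidableEq V] (hT : G.IsTree) (r : V)

noncomputable def descF (x : V) : Finset V := Set.Finite.toFinset (Set.toFinite (desc hT r x))
noncomputable def childrenF (x : V) : Finset V :=
  Set.Finite.toFinset (Set.toFinite (children hT r x))

lemma mem_descF {x u : V} : u ∈ descF hT r x ↔ u ∈ desc hT r x := Set.Finite.mem_toFinset _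
lemma mem_childrenF {x c : V} : c ∈ childrenF hT r x ↔ c ∈ children hT r x :=
  Set.Finite.mem_toFinset _

lemma descF_eq (x : V) :
    descF hT r x = insert x ((childrenF hT r x).biUnion (descF hT r)) := by
  ext u
  simp only [mem_descF, Finset.mem_insert, Finset.mem_biUnion, mem_childrenF]
  constructor
  · intro hu
    by_cases hux : u = x
    · exact Or.inl hux
    · obtain ⟨c, hc, hc2⟩ := desc_decomp hT r hu hux
      exact Or.inr ⟨c, hc, hc2⟩
  · rintro (rfl | ⟨c, hc, hc2⟩)
    · exact mem_desc_self hT r u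
    · exact desc_child_subset hT r hc hc2

lemma descF_card_lt {x c : V} (hc : c ∈ childrenF hT r x) :
    (descF hT r c).card < (descF hT r x).card := by
  apply Finset.card_lt_card
  rw [mem_childrenF] at hc
  constructor
  · intro u hu
    rw [mem_descF] at hu ⊢
    exact desc_child_subset hT r hc hu
  · intro hsub
    have hx : x ∈ descF hT r x := (mem_descF hT r).mpr (mem_desc_self hT r x)
    have := hsub hx
    rw [mem_descF] at this
    exact not_mem_desc_child hT r hc this

lemma descF_inter_card (x : V) (W : Finset V) :
    ((descF hT r x) ∩ W).card
      = (if x ∈ W then 1 else 0) + ∑ c ∈ childrenF hT r x, ((descF hT r c) ∩ W).card := by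
  have hdisj : ∀ c1 ∈ childrenF hT r x, ∀ c2 ∈ childrenF hT r x, c1 ≠ c2 →
      Disjoint (descF hT r c1 ∩ W) (descF hT r c2 ∩ W) := by
    intro c1 h1 c2 h2 hne
    rw [Finset.disjoint_left]
    intro u hu1 hu2
    rw [Finset.mem_inter, mem_descF] at hu1 hu2
    exact hne (desc_child_disjoint hT r ((mem_childrenF hT r).mp h1)
      ((mem_childrenF hT r).mp h2) hu1.1 hu2.1)
  have hb : ((childrenF hT r x).biUnion (descF hT r)) ∩ W
      = (childrenF hT r x).biUnion (fun c => descF hT r c ∩ W) := by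
    ext u; simp only [Finset.mem_inter, Finset.mem_biUnion]; tauto
  have hxnot : x ∉ ((childrenF hT r x).biUnion (descF hT r)) ∩ W := by
    intro hx
    rw [Finset.mem_inter, Finset.mem_biUnion] at hx
    obtain ⟨⟨c, hc, hc2⟩, _⟩ := hx
    rw [mem_descF] at hc2
    exact not_mem_desc_child hT r ((mem_childrenF hT r).mp hc) hc2
  rw [descF_eq hT r x]
  by_cases hxW : x ∈ W
  · rw [Finset.insert_inter_of_mem hxW, if_pos hxW,
      Finset.card_insert_of_notMem hxnot, hb, Finset.card_biUnion hdisj]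
    omega
  · rw [Finset.insert_inter_of_notMem hxW, if_neg hxW, hb, Finset.card_biUnion hdisj]
    omega

section Main
variable (S : Finset V)

noncomputable def sB (x : V) : ℕ := ((descF hT r x) ∩ S).card
noncomputable def hB (x : V) : ℕ := ((descF hT r x) ∩ Sᶜ).card
noncomputable def kB (x : V) : ℕ := ((childrenF hT r x).filter (· ∈ S)).card

lemma sB_rec (x : V) :
    sB hT r S x = (if x ∈ S then 1 else 0) + ∑ c ∈ childrenF hT r x, sB hT r S c :=
  descF_inter_card hT r x S

lemma hB_rec (x : V) :
    hB hT r S x = (if x ∈ S then 0 else 1) + ∑ c ∈ childrenF hT r x, hB hT r S c := by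
  have := descF_inter_card hT r x Sᶜ
  simp only [Finset.mem_compl] at this
  rw [hB]
  rw [this]
  by_cases hx : x ∈ S <;> simp [hx, hB]

lemma kB_pos_of_mem {x c : V} (hc : c ∈ childrenF hT r x) (hcS : c ∈ S) :
    1 ≤ kB hT r S x := by
  apply Finset.card_pos.mpr
  exact ⟨c, Finset.mem_filter.mpr ⟨hc, hcS⟩⟩

/-- The main inductive claims. -/
lemma main_claims
    (hD : ∀ v : V, ∃ a b : V, a ≠ b ∧ a ∈ S ∧ b ∈ S ∧ (a = v ∨ G.Adj v a) ∧ (b = v ∨ G.Adj v b))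
    (hC2 : ∀ u v : V, G.Adj u v → ∃ a b : V, a ≠ b ∧ a ∈ S ∧ b ∈ S ∧ a ≠ u ∧ a ≠ v ∧
      b ≠ u ∧ b ≠ v ∧ (G.Adj u a ∨ G.Adj v a) ∧ (G.Adj u b ∨ G.Adj v b)) :
    ∀ x : V,
      (x ∈ S → 4 * hB hT r S x + 1 + kB hT r S x ≤ sB hT r S x) ∧
      (x ∈ S → x ≠ r → par hT r x ∉ S → 4 * hB hT r S x + 4 ≤ sB hT r S x) ∧
      (x ∉ S → x ≠ r → par hT r x ∉ S → 4 * hB hT r S x + 4 ≤ sB hT r S x) ∧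
      (x ∉ S → x ≠ r → par hT r x ∈ S → 4 * hB hT r S x ≤ sB hT r S x) := by
  have H : ∀ n x, (descF hT r x).card = n →
      (x ∈ S → 4 * hB hT r S x + 1 + kB hT r S x ≤ sB hT r S x) ∧
      (x ∈ S → x ≠ r → par hT r x ∉ S → 4 * hB hT r S x + 4 ≤ sB hT r S x) ∧
      (x ∉ S → x ≠ r → par hT r x ∉ S → 4 * hB hT r S x + 4 ≤ sB hT r S x) ∧
      (x ∉ S → x ≠ r → par hT r x ∈ S → 4 * hB hT r S x ≤ sB hT r S x) := by
    intro n
    induction n using Nat.strong_induction_on with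
    | _ n ih =>
    intro x hxcard
    have ihc : ∀ c ∈ childrenF hT r x,
        (c ∈ S → 4 * hB hT r S c + 1 + kB hT r S c ≤ sB hT r S c) ∧
        (c ∈ S → c ≠ r → par hT r c ∉ S → 4 * hB hT r S c + 4 ≤ sB hT r S c) ∧
        (c ∉ S → c ≠ r → par hT r c ∉ S → 4 * hB hT r S c + 4 ≤ sB hT r S c) ∧
        (c ∉ S → c ≠ r → par hT r c ∈ S → 4 * hB hT r S c ≤ sB hT r S c) := by
      intro c hc
      exact ih _ (hxcard ▸ descF_card_lt hT r hc) c rfl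
    have hchild : ∀ c ∈ childrenF hT r x, par hT r c = x ∧ c ≠ r := by
      intro c hc
      have hc2 := (mem_childrenF hT r).mp hc
      exact ⟨hc2.1, child_ne_root hT r hc2⟩
    set ch := childrenF hT r x with hch
    have hSrec := sB_rec hT r S x
    have hHrec := hB_rec hT r S x
    rw [← hch] at hSrec hHrec
    by_cases hxS : x ∈ S
    · -- x ∈ S : prove P4 (first) and P1 (second); P2, P3 vacuous
      rw [if_pos hxS] at hSrec
      rw [if_pos hxS] at hHrec
      have hlow : ∀ c ∈ ch, 4 * hB hT r S c + (if c ∈ S then 1 + kB hT r S c else 0)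
          ≤ sB hT r S c := by
        intro c hc
        by_cases hcS : c ∈ S
        · rw [if_pos hcS]
          have := (ihc c hc).1 hcS
          omega
        · rw [if_neg hcS]
          have := (ihc c hc).2.2.2 hcS (hchild c hc).2 (by rw [(hchild c hc).1]; exact hxS)
          omega
      have hsum : ∑ c ∈ ch, (4 * hB hT r S c + (if c ∈ S then 1 + kB hT r S c else 0))
          ≤ ∑ c ∈ ch, sB hT r S c := Finset.sum_le_sum hlow
      have hsplit : ∑ c ∈ ch, (4 * hB hT r S c + (if c ∈ S then 1 + kB hT r S c else 0))
          = 4 * (∑ c ∈ ch, hB hT r S c)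
            + (kB hT r S x + ∑ c ∈ ch.filter (· ∈ S), kB hT r S c) := by
        rw [Finset.sum_add_distrib, ← Finset.mul_sum, ← Finset.sum_filter]
        congr 1
        rw [Finset.sum_add_distrib, Finset.sum_const, smul_eq_mul, mul_one]
        congr 1
      refine ⟨fun _ => by omega, ?_, fun h => absurd hxS h, fun h => absurd hxS h⟩
      -- P1 : x ∈ S, x ≠ r, par x ∉ S
      intro _ hxr hparS
      set K := ch.filter (· ∈ S) with hK
      have hKk : K.card = kB hT r S x := rfl
      have hmemK : ∀ a, a ∈ S → G.Adj x a → a ∈ K := by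
        intro a haS hadj
        rcases adj_mem_children_or hT r hadj with h | h
        · exact absurd (h ▸ haS) hparS
        · exact Finset.mem_filter.mpr ⟨(mem_childrenF hT r).mpr h, haS⟩
      have hmemKc : ∀ c ∈ ch, ∀ a, a ∈ S → a ≠ x → G.Adj c a →
          a ∈ (childrenF hT r c).filter (· ∈ S) := by
        intro c hc a haS hax hadj
        rcases adj_mem_children_or hT r hadj with h | h
        · rw [(hchild c hc).1] at h
          exact absurd h hax
        · exact Finset.mem_filter.mpr ⟨(mem_childrenF hT r).mpr h, haS⟩
      have hq3 : 3 ≤ kB hT r S x + ∑ c ∈ K, kB hT r S c := by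
        rcases (show kB hT r S x = 0 ∨ kB hT r S x = 1 ∨ kB hT r S x = 2 ∨ 3 ≤ kB hT r S x
            by omega) with hk | hk | hk | hk
        · -- k = 0 : contradiction with 2-domination at x
          exfalso
          obtain ⟨a, b, hab, haS, hbS, ha, hb⟩ := hD x
          have hKempty : K = ∅ := Finset.card_eq_zero.mp (hKk ▸ hk)
          have hax : a = x := by
            rcases ha with h | h
            · exact h
            · have := hmemK a haS h
              rw [hKempty] at this
              exact absurd this (Finset.notMem_empty a)
          have hbx : b = x := by
            rcases hb with h | h
            · exact h
            · have := hmemK b hbS h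
              rw [hKempty] at this
              exact absurd this (Finset.notMem_empty b)
          exact hab (hax.trans hbx.symm)
        · -- k = 1 : the unique S-child c must have ≥ 2 S-children
          obtain ⟨c, hcK⟩ := Finset.card_eq_one.mp (hKk ▸ hk)
          have hcmem : c ∈ K := by rw [hcK]; exact Finset.mem_singleton_self c
          have hcch : c ∈ ch := (Finset.mem_filter.mp hcmem).1
          have hcS : c ∈ S := (Finset.mem_filter.mp hcmem).2
          have hadjxc : G.Adj x c := child_adj hT r ((mem_childrenF hT r).mp hcch)
          obtain ⟨a, b, hab, haS, hbS, hax, hac, hbx, hbc, ha, hb⟩ := hC2 x c hadjxc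
          have hmema : a ∈ (childrenF hT r c).filter (· ∈ S) := by
            rcases ha with h | h
            · exfalso
              have := hmemK a haS h
              rw [hcK] at this
              exact hac (Finset.mem_singleton.mp this)
            · exact hmemKc c hcch a haS hax h
          have hmemb : b ∈ (childrenF hT r c).filter (· ∈ S) := by
            rcases hb with h | h
            · exfalso
              have := hmemK b hbS h
              rw [hcK] at this
              exact hbc (Finset.mem_singleton.mp this)
            · exact hmemKc c hcch b hbS hbx h
          have h2 : 2 ≤ kB hT r S c := by
            rw [kB]
            exact Finset.one_lt_card.mpr ⟨a, hmema, b, hmemb, hab⟩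
          have hle : kB hT r S c ≤ ∑ c ∈ K, kB hT r S c :=
            Finset.single_le_sum (fun i _ => Nat.zero_le _) hcmem
          omega
        · -- k = 2 : some S-child has an S-child
          rcases Nat.eq_zero_or_pos (∑ c ∈ K, kB hT r S c) with hzero | hpos
          · exfalso
            have hall : ∀ c ∈ K, kB hT r S c = 0 := by
              intro c hc
              exact (Finset.sum_eq_zero_iff.mp hzero) c hc
            have hKne : K.Nonempty := by
              rw [← Finset.card_pos]
              have : K.card = kB hT r S x := hKk
              omega
            obtain ⟨c1, hc1K⟩ := hKne
            have hc1ch : c1 ∈ ch := (Finset.mem_filter.mp hc1K).1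
            have hadjxc : G.Adj x c1 := child_adj hT r ((mem_childrenF hT r).mp hc1ch)
            obtain ⟨a, b, hab, haS, hbS, hax, hac, hbx, hbc, ha, hb⟩ := hC2 x c1 hadjxc
            have hmema : a ∈ K.erase c1 := by
              rcases ha with h | h
              · exact Finset.mem_erase.mpr ⟨hac, hmemK a haS h⟩
              · exfalso
                have := hmemKc c1 hc1ch a haS hax h
                have : 1 ≤ kB hT r S c1 := Finset.card_pos.mpr ⟨a, this⟩
                rw [hall c1 hc1K] at this
                omega
            have hmemb : b ∈ K.erase c1 := by
              rcases hb with h | h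
              · exact Finset.mem_erase.mpr ⟨hbc, hmemK b hbS h⟩
              · exfalso
                have := hmemKc c1 hc1ch b hbS hbx h
                have : 1 ≤ kB hT r S c1 := Finset.card_pos.mpr ⟨b, this⟩
                rw [hall c1 hc1K] at this
                omega
            have hcard : (K.erase c1).card = 1 := by
              have h1 : K.card = kB hT r S x := hKk
              rw [Finset.card_erase_of_mem hc1K]
              omega
            have := Finset.card_le_one.mp (le_of_eq hcard) a hmema b hmemb
            exact hab this
          · omega
        · omega
      omega
    · -- x ∉ S : prove P2 (third) and P3 (fourth)
      rw [if_neg hxS] at hSrec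
      rw [if_neg hxS] at hHrec
      have hlow : ∀ c ∈ ch, 4 * hB hT r S c + 4 ≤ sB hT r S c := by
        intro c hc
        by_cases hcS : c ∈ S
        · exact (ihc c hc).2.1 hcS (hchild c hc).2 (by rw [(hchild c hc).1]; exact hxS)
        · exact (ihc c hc).2.2.1 hcS (hchild c hc).2 (by rw [(hchild c hc).1]; exact hxS)
      have hsum : ∑ c ∈ ch, (4 * hB hT r S c + 4) ≤ ∑ c ∈ ch, sB hT r S c :=
        Finset.sum_le_sum hlow
      have hsplit : ∑ c ∈ ch, (4 * hB hT r S c + 4)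
          = 4 * (∑ c ∈ ch, hB hT r S c) + 4 * ch.card := by
        rw [Finset.sum_add_distrib, ← Finset.mul_sum, Finset.sum_const, smul_eq_mul]
        ring
      have hmemch : ∀ a, a ∈ S → G.Adj x a → par hT r x ∉ S → a ∈ ch := by
        intro a haS hadj hparS
        rcases adj_mem_children_or hT r hadj with h | h
        · exact absurd (h ▸ haS) hparS
        · exact (mem_childrenF hT r).mpr h
      refine ⟨fun h => absurd h hxS, fun h => absurd h hxS, ?_, ?_⟩
      · -- P2 : x ∉ S, par x ∉ S : at least two children (indeed two S-children)
        intro _ hxr hparS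
        obtain ⟨a, b, hab, haS, hbS, ha, hb⟩ := hD x
        have hane : a ≠ x := fun h => hxS (h ▸ haS)
        have hbne : b ≠ x := fun h => hxS (h ▸ hbS)
        have hach : a ∈ ch := hmemch a haS (ha.resolve_left hane) hparS
        have hbch : b ∈ ch := hmemch b hbS (hb.resolve_left hbne) hparS
        have h2 : 2 ≤ ch.card := Finset.one_lt_card.mpr ⟨a, hach, b, hbch, hab⟩
        omega
      · -- P3 : x ∉ S, par x ∈ S : at least one child
        intro _ hxr hparS
        obtain ⟨a, b, hab, haS, hbS, ha, hb⟩ := hD x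
        have hane : a ≠ x := fun h => hxS (h ▸ haS)
        have hbne : b ≠ x := fun h => hxS (h ▸ hbS)
        have h1 : 1 ≤ ch.card := by
          rcases adj_mem_children_or hT r (ha.resolve_left hane) with h | h
          · rcases adj_mem_children_or hT r (hb.resolve_left hbne) with h2 | h2
            · exact absurd (h.trans h2.symm) hab
            · exact Finset.card_pos.mpr ⟨b, (mem_childrenF hT r).mpr h2⟩
          · exact Finset.card_pos.mpr ⟨a, (mem_childrenF hT r).mpr h⟩
        omega
  intro x
  exact H _ x rfl

end Main

section Root
variable [Fintype V] [DecidableEq V]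

lemma root_bound (hT : G.IsTree) (r : V) (S : Finset V) (hrS : r ∉ S)
    (hD : ∀ v : V, ∃ a b : V, a ≠ b ∧ a ∈ S ∧ b ∈ S ∧ (a = v ∨ G.Adj v a) ∧ (b = v ∨ G.Adj v b))
    (hC2 : ∀ u v : V, G.Adj u v → ∃ a b : V, a ≠ b ∧ a ∈ S ∧ b ∈ S ∧ a ≠ u ∧ a ≠ v ∧
      b ≠ u ∧ b ≠ v ∧ (G.Adj u a ∨ G.Adj v a) ∧ (G.Adj u b ∨ G.Adj v b)) :
    4 * Sᶜ.card + 4 ≤ S.card := by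
  have hdesc : descF hT r r = Finset.univ := by
    ext u
    simp only [Finset.mem_univ, iff_true, mem_descF]
    exact root_mem_desc_all hT r u
  have hSr : sB hT r S r = S.card := by
    rw [sB, hdesc, Finset.univ_inter]
  have hHr : hB hT r S r = Sᶜ.card := by
    rw [hB, hdesc, Finset.univ_inter]
  have hSrec := sB_rec hT r S r
  have hHrec := hB_rec hT r S r
  rw [if_neg hrS] at hSrec hHrec
  set ch := childrenF hT r r with hch
  have hchild : ∀ c ∈ ch, par hT r c = r ∧ c ≠ r := by
    intro c hc
    have hc2 := (mem_childrenF hT r).mp hc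
    exact ⟨hc2.1, child_ne_root hT r hc2⟩
  have hmain := main_claims hT r S hD hC2
  have hlow : ∀ c ∈ ch, 4 * hB hT r S c + 4 ≤ sB hT r S c := by
    intro c hc
    by_cases hcS : c ∈ S
    · exact (hmain c).2.1 hcS (hchild c hc).2 (by rw [(hchild c hc).1]; exact hrS)
    · exact (hmain c).2.2.1 hcS (hchild c hc).2 (by rw [(hchild c hc).1]; exact hrS)
  have hsum : ∑ c ∈ ch, (4 * hB hT r S c + 4) ≤ ∑ c ∈ ch, sB hT r S c :=
    Finset.sum_le_sum hlow
  have hsplit : ∑ c ∈ ch, (4 * hB hT r S c + 4)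
      = 4 * (∑ c ∈ ch, hB hT r S c) + 4 * ch.card := by
    rw [Finset.sum_add_distrib, ← Finset.mul_sum, Finset.sum_const, smul_eq_mul]
    ring
  have h2 : 2 ≤ ch.card := by
    obtain ⟨a, b, hab, haS, hbS, ha, hb⟩ := hD r
    have hane : a ≠ r := fun h => hrS (h ▸ haS)
    have hbne : b ≠ r := fun h => hrS (h ▸ hbS)
    have hach : a ∈ ch := by
      rcases adj_mem_children_or hT r (ha.resolve_left hane) with h | h
      · rw [par_r] at h; exact absurd h hane
      · exact (mem_childrenF hT r).mpr h
    have hbch : b ∈ ch := by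
      rcases adj_mem_children_or hT r (hb.resolve_left hbne) with h | h
      · rw [par_r] at h; exact absurd h hbne
      · exact (mem_childrenF hT r).mpr h
    exact Finset.one_lt_card.mpr ⟨a, hach, b, hbch, hab⟩
  omega

/-- The key combinatorial bound: `4 n + 4 ≤ 5 |S|`. -/
lemma key_bound (hT : G.IsTree) (S : Finset V) (hn : 4 ≤ Fintype.card V)
    (hD : ∀ v : V, ∃ a b : V, a ≠ b ∧ a ∈ S ∧ b ∈ S ∧ (a = v ∨ G.Adj v a) ∧ (b = v ∨ G.Adj v b))
    (hC2 : ∀ u v : V, G.Adj u v → ∃ a b : V, a ≠ b ∧ a ∈ S ∧ b ∈ S ∧ a ≠ u ∧ a ≠ v ∧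
      b ≠ u ∧ b ≠ v ∧ (G.Adj u a ∨ G.Adj v a) ∧ (G.Adj u b ∨ G.Adj v b)) :
    4 * Fintype.card V + 4 ≤ 5 * S.card := by
  have hcompl : S.card + Sᶜ.card = Fintype.card V := by
    rw [Finset.card_add_card_compl]
  rcases Finset.eq_empty_or_nonempty Sᶜ with hempty | ⟨r, hr⟩
  · have : Sᶜ.card = 0 := by rw [hempty]; rfl
    omega
  · have hrS : r ∉ S := Finset.mem_compl.mp hr
    have := root_bound hT r S hrS hD hC2
    omega

end Root

end Count

end RedICProof

/-- `(4 * (n + 1) + 4) / 5` is the natural-number ceiling `⌈4(n+1)/5⌉`. -/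
theorem stmt_16 {V : Type*} [Fintype V] (G : SimpleGraph V) (hT : G.IsTree)
    (hn : 4 ≤ Fintype.card V) (hex : ∃ S : Set V, IsRedIC G S) :
    (4 * (Fintype.card V + 1) + 4) / 5 ≤ redIC G ∧ redIC G ≤ Fintype.card V := by
  classical
  obtain ⟨S0, hS0⟩ := hex
  -- extraction of the two local conditions from a RED:IC
  have extractD : ∀ (S : Set V), IsRedIC G S → ∀ v : V, ∃ a b : V, a ≠ b ∧ a ∈ S.toFinset ∧
      b ∈ S.toFinset ∧ (a = v ∨ G.Adj v a) ∧ (b = v ∨ G.Adj v b) := by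
    intro S hS v
    have h2 : 2 ≤ (closedNbhd G v ∩ S).ncard := hS.1 v
    have h1 : 1 < (closedNbhd G v ∩ S).ncard := by omega
    obtain ⟨a, b, ha, hb, hab⟩ := (Set.one_lt_ncard_iff (Set.toFinite _)).mp h1
    refine ⟨a, b, hab, Set.mem_toFinset.mpr ha.2, Set.mem_toFinset.mpr hb.2, ?_, ?_⟩
    · rcases ha.1 with h | h
      · exact Or.inl h
      · exact Or.inr h
    · rcases hb.1 with h | h
      · exact Or.inl h
      · exact Or.inr h
  have extractC2 : ∀ (S : Set V), IsRedIC G S → ∀ u v : V, G.Adj u v →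
      ∃ a b : V, a ≠ b ∧ a ∈ S.toFinset ∧ b ∈ S.toFinset ∧ a ≠ u ∧ a ≠ v ∧
        b ≠ u ∧ b ≠ v ∧ (G.Adj u a ∨ G.Adj v a) ∧ (G.Adj u b ∨ G.Adj v b) := by
    intro S hS u v huv
    have h2 : 2 ≤ ((closedNbhd G u ∩ S) ∆ (closedNbhd G v ∩ S)).ncard := hS.2 u v huv.ne
    have h1 : 1 < ((closedNbhd G u ∩ S) ∆ (closedNbhd G v ∩ S)).ncard := by omega
    obtain ⟨a, b, ha, hb, hab⟩ := (Set.one_lt_ncard_iff (Set.toFinite _)).mp h1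
    have hprop : ∀ c : V, c ∈ (closedNbhd G u ∩ S) ∆ (closedNbhd G v ∩ S) →
        c ∈ S ∧ c ≠ u ∧ c ≠ v ∧ (G.Adj u c ∨ G.Adj v c) := by
      intro c hc
      rw [Set.mem_symmDiff] at hc
      have hcS : c ∈ S := by
        rcases hc with ⟨⟨_, h⟩, _⟩ | ⟨⟨_, h⟩, _⟩ <;> exact h
      have hcu : c ≠ u := by
        intro he
        have h1 : c ∈ closedNbhd G u ∩ S := ⟨by rw [he]; exact Set.mem_insert _ _, hcS⟩
        have h2 : c ∈ closedNbhd G v ∩ S :=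
          ⟨Set.mem_insert_iff.mpr (Or.inr (by rw [he]; exact huv.symm)), hcS⟩
        rcases hc with ⟨_, h⟩ | ⟨_, h⟩
        · exact h h2
        · exact h h1
      have hcv : c ≠ v := by
        intro he
        have h1 : c ∈ closedNbhd G u ∩ S :=
          ⟨Set.mem_insert_iff.mpr (Or.inr (by rw [he]; exact huv)), hcS⟩
        have h2 : c ∈ closedNbhd G v ∩ S := ⟨by rw [he]; exact Set.mem_insert _ _, hcS⟩
        rcases hc with ⟨_, h⟩ | ⟨_, h⟩
        · exact h h2
        · exact h h1
      refine ⟨hcS, hcu, hcv, ?_⟩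
      rcases hc with ⟨⟨h, _⟩, _⟩ | ⟨⟨h, _⟩, _⟩
      · rcases Set.mem_insert_iff.mp h with h' | h'
        · exact absurd h' hcu
        · exact Or.inl h'
      · rcases Set.mem_insert_iff.mp h with h' | h'
        · exact absurd h' hcv
        · exact Or.inr h'
    obtain ⟨haS, hau, hav, haadj⟩ := hprop a ha
    obtain ⟨hbS, hbu, hbv, hbadj⟩ := hprop b hb
    exact ⟨a, b, hab, Set.mem_toFinset.mpr haS, Set.mem_toFinset.mpr hbS,
      hau, hav, hbu, hbv, haadj, hbadj⟩
  constructor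
  · -- lower bound
    refine le_csInf ⟨S0.ncard, S0, hS0, rfl⟩ ?_
    rintro m ⟨S, hS, rfl⟩
    have hkey := key_bound hT S.toFinset hn (extractD S hS) (extractC2 S hS)
    have hcard : S.ncard = S.toFinset.card := Set.ncard_eq_toFinset_card' S
    omega
  · -- upper bound
    have h1 : redIC G ≤ S0.ncard := Nat.sInf_le ⟨S0, hS0, rfl⟩
    have h2 : S0.ncard ≤ Fintype.card V := by
      have := Set.ncard_le_ncard (Set.subset_univ S0) (Set.toFinite _)
      simpa [Set.ncard_univ, Nat.card_eq_fintype_card] using this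
    omega
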